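/- Let N ≥ 1 be an integer and let m, p, σ be real numbers with max(N−2,0)/N < m < 1, p > 1 and σ > σ* := 2(p−1)/(1−m), and set Z0 := (σ+2)(m(N+σ) − p(N−2))/(p−m)². Let (x,y,z) be a solution of the system (S) on an interval I and let η₀ ∈ I satisfy y(η₀) > −(σ+2)/(p−m) and z(η₀) > Z0. Then for every η ∈ I with η ≥ η₀ one has y(η) > −(σ+2)/(p−m) and z(η) > Z0; that is, the region R := {(x,y,z) : y > −(σ+2)/(p−m), z > Z0} is positively invariant for (S). -/

import Mathlib

/-- The region R = {y > -(σ+2)/(p-m), z > Z0} is positively invariant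
for the system (S). -/
theorem stmt9 (N : ℕ) (hN : 1 ≤ N) (m p σ : ℝ)
    (hm1 : max ((N : ℝ) - 2) 0 / N < m) (hm2 : m < 1) (hp : 1 < p)
    (hσ : 2 * (p - 1) / (1 - m) < σ)
    (Z0 : ℝ)
    (hZ0 : Z0 = (σ + 2) * (m * ((N : ℝ) + σ) - p * ((N : ℝ) - 2)) / (p - m) ^ 2)
    (I : Set ℝ) (hI : I.OrdConnected)
    (x y z : ℝ → ℝ)
    (hx : ∀ η ∈ I, HasDerivWithinAt x (x η * (2 + (1 - m) * y η)) I η)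
    (hy : ∀ η ∈ I, HasDerivWithinAt y (-(x η) - ((N : ℝ) - 2) * y η + z η
      - m * (y η) ^ 2 - (p - m) / (σ + 2) * x η * y η) I η)
    (hz : ∀ η ∈ I, HasDerivWithinAt z (z η * (σ + 2 + (p - m) * y η)) I η)
    (η₀ : ℝ) (hη₀ : η₀ ∈ I)
    (hy0 : -((σ + 2) / (p - m)) < y η₀) (hz0 : Z0 < z η₀) :
    ∀ η ∈ I, η₀ ≤ η → -((σ + 2) / (p - m)) < y η ∧ Z0 < z η := by
  have hNr : (0:ℝ) < N := by exact_mod_cast hN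
  have h1m : (0:ℝ) < 1 - m := by linarith
  have hpm : (0:ℝ) < p - m := by linarith
  have hm0 : (0:ℝ) < m := lt_of_le_of_lt (div_nonneg (le_max_right _ _) hNr.le) hm1
  have hmN : (N:ℝ) - 2 < m * N := by
    have h1 : ((N:ℝ) - 2)/N ≤ max ((N:ℝ)-2) 0 / N := by
      gcongr
      exact le_max_left _ _
    have h2 := lt_of_le_of_lt h1 hm1
    rw [div_lt_iff₀ hNr] at h2
    linarith
  have hσ0 : (0:ℝ) < σ := lt_trans (div_pos (by linarith) h1m) hσ
  have hσ2 : (0:ℝ) < σ + 2 := by linarith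
  have hσ' : 2*(p-1) < σ*(1-m) := by
    rw [div_lt_iff₀ h1m] at hσ; linarith
  have hZ0pos : 0 < Z0 := by
    rw [hZ0]
    apply div_pos _ (by positivity)
    have key : 0 < m * ((N:ℝ)+σ) - p*((N:ℝ)-2) := by
      nlinarith [mul_pos hm0 (by linarith : (0:ℝ) < σ*(1-m) - 2*(p-1)),
        mul_pos (by linarith : (0:ℝ) < p-1) (by linarith : (0:ℝ) < m*N - ((N:ℝ)-2)),
        mul_pos h1m (by linarith : (0:ℝ) < m*N - ((N:ℝ)-2))]
    nlinarith [key, hσ2]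
  -- equivalence between the y-condition and positivity of w
  have hiff : ∀ t : ℝ, -((σ+2)/(p-m)) < t ↔ 0 < σ + 2 + (p-m)*t := by
    intro t
    rw [← neg_div, div_lt_iff₀ hpm, mul_comm]
    constructor <;> intro h <;> linarith
  have hcx : ContinuousOn x I := fun η hη => (hx η hη).continuousWithinAt
  have hcy : ContinuousOn y I := fun η hη => (hy η hη).continuousWithinAt
  have hcz : ContinuousOn z I := fun η hη => (hz η hη).continuousWithinAt
  intro η₁ hη₁ h01
  have hJI : Set.Icc η₀ η₁ ⊆ I := hI.out hη₀ hη₁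
  by_contra hcon
  push_neg at hcon
  -- the bad set
  set S : Set ℝ := {t ∈ Set.Icc η₀ η₁ | z t ≤ Z0 ∨ σ + 2 + (p-m) * y t ≤ 0} with hS
  have hcwI : ContinuousOn (fun t => σ + 2 + (p-m) * y t) I :=
    continuousOn_const.add (continuousOn_const.mul hcy)
  have hSclosed : IsClosed S := by
    have h1 : IsClosed (Set.Icc η₀ η₁ ∩ z ⁻¹' Set.Iic Z0) :=
      (hcz.mono hJI).preimage_isClosed_of_isClosed isClosed_Icc isClosed_Iic
    have h2 : IsClosed (Set.Icc η₀ η₁ ∩ (fun t => σ + 2 + (p-m) * y t) ⁻¹' Set.Iic 0) :=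
      (hcwI.mono hJI).preimage_isClosed_of_isClosed isClosed_Icc isClosed_Iic
    have heq : S = (Set.Icc η₀ η₁ ∩ z ⁻¹' Set.Iic Z0) ∪
        (Set.Icc η₀ η₁ ∩ (fun t => σ + 2 + (p-m) * y t) ⁻¹' Set.Iic 0) := by
      ext t
      simp only [hS, Set.mem_setOf_eq, Set.mem_union, Set.mem_inter_iff, Set.mem_preimage,
        Set.mem_Iic]
      tauto
    rw [heq]
    exact h1.union h2
  have hScomp : IsCompact S := isCompact_Icc.of_isClosed_subset hSclosed (fun t ht => ht.1)
  have hSne : S.Nonempty := by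
    refine ⟨η₁, ⟨h01, le_refl _⟩, ?_⟩
    by_cases hby : -((σ + 2) / (p - m)) < y η₁
    · exact Or.inl (hcon hby)
    · right
      have := (hiff (y η₁)).not.mp hby
      linarith [not_lt.mp this]
  have hbdd : BddBelow S := ⟨η₀, fun t ht => ht.1.1⟩
  set τ := sInf S with hτdef
  have hτS : τ ∈ S := hScomp.sInf_mem hSne
  have hτJ : τ ∈ Set.Icc η₀ η₁ := hτS.1
  have hη₀S : η₀ ∉ S := by
    intro h
    rcases h.2 with h' | h'
    · linarith
    · have := (hiff (y η₀)).mp hy0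
      linarith
  have hη₀τ : η₀ < τ := lt_of_le_of_ne hτJ.1 (fun h => hη₀S (h ▸ hτS))
  -- strict positivity before τ
  have hgood : ∀ t ∈ Set.Ico η₀ τ, Z0 < z t ∧ 0 < σ + 2 + (p-m) * y t := by
    intro t ht
    have htJ : t ∈ Set.Icc η₀ η₁ := ⟨ht.1, le_trans ht.2.le hτJ.2⟩
    have htS : t ∉ S := fun hts => (not_le.mpr ht.2) (csInf_le hbdd hts)
    have h2 : ¬(z t ≤ Z0 ∨ σ + 2 + (p-m) * y t ≤ 0) := fun h => htS ⟨htJ, h⟩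
    push_neg at h2
    exact h2
  have hsub : Set.Icc η₀ τ ⊆ I := fun t ht => hJI ⟨ht.1, le_trans ht.2 hτJ.2⟩
  have hmem : ∀ t ∈ Set.Ioo η₀ τ, I ∈ nhds t := by
    intro t ht
    have h1 : Set.Ioo η₀ η₁ ∈ nhds t := Ioo_mem_nhds ht.1 (lt_of_lt_of_le ht.2 hτJ.2)
    exact Filter.mem_of_superset h1 (Set.Ioo_subset_Icc_self.trans hJI)
  -- z is monotone on [η₀, τ]
  have hzmono : MonotoneOn z (Set.Icc η₀ τ) := by
    apply monotoneOn_of_deriv_nonneg (convex_Icc _ _) (hcz.mono hsub)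
    · intro t ht
      rw [interior_Icc] at ht
      exact (((hz t (hsub (Set.Ioo_subset_Icc_self ht))).hasDerivAt
        (hmem t ht)).differentiableAt).differentiableWithinAt
    · intro t ht
      rw [interior_Icc] at ht
      rw [((hz t (hsub (Set.Ioo_subset_Icc_self ht))).hasDerivAt (hmem t ht)).deriv]
      have hg := hgood t ⟨ht.1.le, ht.2⟩
      have hz' : 0 < z t := lt_trans hZ0pos hg.1
      exact le_of_lt (mul_pos hz' hg.2)
  have hzτ : Z0 < z τ := by
    have := hzmono ⟨le_refl _, hη₀τ.le⟩ ⟨hη₀τ.le, le_refl _⟩ hη₀τ.le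
    linarith
  -- bound on the coefficient
  obtain ⟨K, hK⟩ := isCompact_Icc.exists_bound_of_continuousOn
    (f := fun t => ((N:ℝ)-2) + m * (-((σ+2)/(p-m)) + y t) + (p-m) * x t / (σ+2))
    (s := Set.Icc η₀ η₁)
    ((continuousOn_const.add (continuousOn_const.mul
      (continuousOn_const.add (hcy.mono hJI)))).add
      (((continuousOn_const.mul (hcx.mono hJI))).div_const _))
  -- the auxiliary function g
  have hgmono : MonotoneOn (fun t => (σ + 2 + (p-m) * y t) * Real.exp (K * t))
      (Set.Icc η₀ τ) := by
    apply monotoneOn_of_deriv_nonneg (convex_Icc _ _)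
    · exact ((continuousOn_const.add (continuousOn_const.mul (hcy.mono hsub))).mul
        (Real.continuous_exp.comp (continuous_const.mul continuous_id)).continuousOn)
    · intro t ht
      rw [interior_Icc] at ht
      have hyd := (hy t (hsub (Set.Ioo_subset_Icc_self ht))).hasDerivAt (hmem t ht)
      have hwd : HasDerivAt (fun s => σ + 2 + (p-m) * y s)
          ((p-m) * (-(x t) - ((N : ℝ) - 2) * y t + z t
            - m * (y t) ^ 2 - (p - m) / (σ + 2) * x t * y t)) t :=
        (hyd.const_mul (p-m)).const_add (σ+2)
      have hed : HasDerivAt (fun s => Real.exp (K * s)) (Real.exp (K * t) * (K * 1)) t :=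
        ((hasDerivAt_id t).const_mul K).exp
      exact ((hwd.mul hed).differentiableAt).differentiableWithinAt
    · intro t ht
      rw [interior_Icc] at ht
      have htJ : t ∈ Set.Icc η₀ η₁ := ⟨ht.1.le, le_trans ht.2.le hτJ.2⟩
      have hyd := (hy t (hsub (Set.Ioo_subset_Icc_self ht))).hasDerivAt (hmem t ht)
      have hwd : HasDerivAt (fun s => σ + 2 + (p-m) * y s)
          ((p-m) * (-(x t) - ((N : ℝ) - 2) * y t + z t
            - m * (y t) ^ 2 - (p - m) / (σ + 2) * x t * y t)) t :=
        (hyd.const_mul (p-m)).const_add (σ+2)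
      have hed : HasDerivAt (fun s => Real.exp (K * s)) (Real.exp (K * t) * (K * 1)) t :=
        ((hasDerivAt_id t).const_mul K).exp
      rw [(show HasDerivAt (fun s => (σ + 2 + (p-m) * y s) * Real.exp (K * s)) _ t from hwd.mul hed).deriv]
      have hg := hgood t ⟨ht.1.le, ht.2⟩
      have hct := abs_le.mp (by simpa [Real.norm_eq_abs] using hK t htJ)
      have hE : 0 < Real.exp (K * t) := Real.exp_pos _
      have hid : (p-m) * (-(x t) - ((N : ℝ) - 2) * y t + z t
            - m * (y t) ^ 2 - (p - m) / (σ + 2) * x t * y t)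
          = (p-m) * (z t - Z0)
            - (((N:ℝ)-2) + m * (-((σ+2)/(p-m)) + y t) + (p-m) * x t / (σ+2))
              * (σ + 2 + (p-m) * y t) := by
        rw [hZ0]
        field_simp
        ring
      have hcalc : (p-m) * (-(x t) - ((N : ℝ) - 2) * y t + z t
            - m * (y t) ^ 2 - (p - m) / (σ + 2) * x t * y t) * Real.exp (K * t)
          + (σ + 2 + (p-m) * y t) * (Real.exp (K * t) * (K * 1))
          = Real.exp (K * t) * ((p-m) * (z t - Z0)
            + (K - (((N:ℝ)-2) + m * (-((σ+2)/(p-m)) + y t) + (p-m) * x t / (σ+2)))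
              * (σ + 2 + (p-m) * y t)) := by
        rw [hid]; ring
      rw [hcalc]
      have t1 : 0 < (p-m) * (z t - Z0) := mul_pos hpm (by linarith [hg.1])
      have t2 : 0 ≤ (K - (((N:ℝ)-2) + m * (-((σ+2)/(p-m)) + y t) + (p-m) * x t / (σ+2)))
          * (σ + 2 + (p-m) * y t) := mul_nonneg (by linarith [hct.2]) hg.2.le
      positivity
  have hwτ : 0 < σ + 2 + (p-m) * y τ := by
    have h1 := hgmono (Set.left_mem_Icc.mpr hη₀τ.le) (Set.right_mem_Icc.mpr hη₀τ.le) hη₀τ.le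
    have h2 : 0 < σ + 2 + (p-m) * y η₀ := (hiff (y η₀)).mp hy0
    have hE0 : 0 < Real.exp (K * η₀) := Real.exp_pos _
    have hEτ : 0 < Real.exp (K * τ) := Real.exp_pos _
    have h1' : (σ + 2 + (p-m) * y η₀) * Real.exp (K * η₀)
        ≤ (σ + 2 + (p-m) * y τ) * Real.exp (K * τ) := h1
    nlinarith [mul_pos h2 hE0]
  rcases hτS.2 with h | h
  · linarith
  · linarith
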